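/- Let M be a map and let E0 = {s1,s2} be an interface edge of M whose edge-sides lie in two different faces F1 and F2 of respective sizes 2r and 2s. Then the faces of M \ E0 are obtained from the faces of M by replacing F1 and F2 by a single face of size 2(r+s−1), all other faces of M being unchanged. -/

import Mathlib

open Equiv Polynomial

open scoped Classical

noncomputable section

variable {α : Type*}

/-- `f` is a *pairing* of the finite set `S`: an involution of the ambient type which
moves exactly the elements of `S` (i.e., a fixpoint-free involution of `S`, extended by
the identity outside of `S`); the pairs of the pairing are the orbits `{a, f a}`. -/
def IsPairing (S : Finset α) (f : Equiv.Perm α) : Prop :=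
  (∀ a, f (f a) = a) ∧ ∀ a, f a ≠ a ↔ a ∈ S

/-- The pairing `P_{{s₁,s₂}}` obtained from the pairing `f` by removing the elements
`s₁, s₂` : if `{s₁,s₂}` is a pair of `f` it is simply deleted; otherwise the pairs
containing `s₁` and `s₂` are deleted and the partners `f s₁`, `f s₂` are matched
together. -/
def removeP (f : Equiv.Perm α) (s₁ s₂ : α) : Equiv.Perm α :=
  Equiv.swap s₁ s₂ * Equiv.swap s₁ (f s₂) * Equiv.swap s₂ (f s₁) * f

/-- `t` lies in the polygon of `L(b,w)` containing `s`, in *even position* with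
respect to `s`: `t` is obtained from `s` by an odd alternating word in the
involutions `b` and `w`. -/
def EvenPos (b w : Equiv.Perm α) (s t : α) : Prop :=
  ∃ j : ℤ, t = ((w * b) ^ j * b) s

/-- `t` lies in the polygon of `L(b,w)` containing `s`, in *odd position* with respect
to `s`: `t` is obtained from `s` by an even alternating word in the involutions
`b` and `w`. -/
def OddPos (b w : Equiv.Perm α) (s t : α) : Prop :=
  ∃ j : ℤ, t = ((w * b) ^ j) s

/-- `s` and `t` lie in the same polygon of `L(b,w)`. -/
def SameFace (b w : Equiv.Perm α) (s t : α) : Prop :=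
  EvenPos b w s t ∨ OddPos b w s t

/-- The edge `{s,t}` is *straight*: both edge-sides lie in the same face,
in even position. -/
def IsStraight (b w : Equiv.Perm α) (s t : α) : Prop :=
  SameFace b w s t ∧ EvenPos b w s t

/-- The edge `{s,t}` is *twisted*: both edge-sides lie in the same face,
in odd position. -/
def IsTwisted (b w : Equiv.Perm α) (s t : α) : Prop :=
  SameFace b w s t ∧ OddPos b w s t

/-- The edge `{s,t}` is an *interface* edge: its edge-sides lie in two
different faces. -/
def IsInterface (b w : Equiv.Perm α) (s t : α) : Prop :=
  ¬ SameFace b w s t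

/-- The polygon (face) of `L(b,w)` containing `s`, as the set of its edge-sides. -/
def faceOf (S : Finset α) (b w : Equiv.Perm α) (s : α) : Finset α :=
  S.filter (SameFace b w s)

/-- The collection of polygons (faces) of `L(b,w)`. -/
def faces (S : Finset α) (b w : Equiv.Perm α) : Finset (Finset α) :=
  S.image (faceOf S b w)

/-- The number of polygons (faces) of `L(b,w)`. -/
def numFaces (S : Finset α) (b w : Equiv.Perm α) : ℕ :=
  (faces S b w).card

/-- The *type* of the couple of pairings `(b,w)`: the multiset of half-lengths of the
polygons of `L(b,w)`. -/
def faceType (S : Finset α) (b w : Equiv.Perm α) : Multiset ℕ :=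
  (faces S b w).val.map fun F => F.card / 2

/-- `s` and `t` lie in the same connected component of the map `(b,w,e)`:
`t` is obtained from `s` by applying partner maps in `b`, `w`, `e` repeatedly. -/
def SameComponent (b w e : Equiv.Perm α) (s t : α) : Prop :=
  ∃ g ∈ Subgroup.closure ({b, w, e} : Set (Equiv.Perm α)), g s = t

/-- The number of connected components of the map `(S, b, w, e)`. -/
def numComponents (S : Finset α) (b w e : Equiv.Perm α) : ℕ :=
  (S.image fun s => S.filter (SameComponent b w e s)).card

/-- The number of vertices of the map `(S, b, w, e)`: black vertices are the polygons
of `L(b,e)`, white vertices are the polygons of `L(w,e)`. -/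
def numVertices (S : Finset α) (b w e : Equiv.Perm α) : ℕ :=
  numFaces S b e + numFaces S w e

/-- The number of edges of a map with edge-side set `S`. -/
def numEdges (S : Finset α) : ℕ := S.card / 2

/-- The Euler characteristic `χ(M) = |V(M)| - |E(M)| + |F(M)|` of the map
`M = (S, b, w, e)`. -/
def eulerChar (S : Finset α) (b w e : Equiv.Perm α) : ℤ :=
  (numVertices S b w e : ℤ) - (numEdges S : ℤ) + (numFaces S b w : ℤ)

/-- The quantity `d(M) = 2·(number of connected components of M) - χ(M)`. -/
def dInv (S : Finset α) (b w e : Equiv.Perm α) : ℤ :=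
  2 * (numComponents S b w e : ℤ) - eulerChar S b w e

/-- The edge `{s, e s}` of the map `(b, w, e)` is a *bridge*: either one of its
extremities is a leaf (the pair belongs to `b` or to `w` as well), or its two
extremities lie in different connected components of the map with this edge removed. -/
def IsBridge (b w e : Equiv.Perm α) (s : α) : Prop :=
  (b s = e s ∨ w s = e s) ∨
    ¬ SameComponent (removeP b s (e s)) (removeP w s (e s)) (removeP e s (e s))
        (b s) (w s)

/-- The weight of the edge `{s,t}` in the map with face structure given by `(b,w)`,
as a polynomial in the variable `γ` (over `ℚ`): `1` for a straight edge, `γ` for a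
twisted edge, `1/2` for an interface edge. -/
def edgeWeight (b w : Equiv.Perm α) (s t : α) : Polynomial ℚ :=
  if IsStraight b w s t then 1
  else if IsTwisted b w s t then Polynomial.X
  else Polynomial.C (1 / 2)

/-- The weight `w_{M,≺}` of a map `(b,w,e)` equipped with a history, the latter
encoded as the list of the edges in increasing order (each edge represented by one
of its edge-sides): the product of the weights of the edges, each weight being
computed in the map in which all previous edges have already been removed. -/
def histWeight : Equiv.Perm α → Equiv.Perm α → Equiv.Perm α → List α → Polynomial ℚ
  | _, _, _, [] => 1
  | b, w, e, s :: L =>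
      edgeWeight b w s (e s) *
        histWeight (removeP b s (e s)) (removeP w s (e s)) (removeP e s (e s)) L

/-- `L` encodes a *history* (a linear order on the edges) of the map with edge-side
set `S` and edge pairing `e`: it lists every edge exactly once, each edge being
represented by its smaller edge-side. -/
def IsHistory [LinearOrder α] (S : Finset α) (e : Equiv.Perm α) (L : List α) : Prop :=
  L.Nodup ∧ (∀ s ∈ L, s ∈ S ∧ s < e s) ∧ ∀ a ∈ S, a ∈ L ∨ e a ∈ L

/-- The *measure of non-orientability* `w_M` of the map `(S,b,w,e)`: the average of
`w_{M,≺}` over all `n!` histories `≺`, as a polynomial in the variable `γ` over `ℚ`. -/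
def mapWeight [LinearOrder α] (S : Finset α) (b w e : Equiv.Perm α) : Polynomial ℚ :=
  Polynomial.C (1 / ((numEdges S).factorial : ℚ)) *
    ∑ F ∈ (Fintype.piFinset fun _ : Fin (numEdges S) => S).filter
        (fun F => IsHistory S e (List.ofFn F)),
      histWeight b w e (List.ofFn F)

/-- The number of embeddings `N_M(λ)` of the underlying bipartite graph of the map
`(S,b,w,e)` into the Young diagram whose list of row lengths is `lam`: an embedding
maps black vertices (polygons of `L(b,e)`) to rows, white vertices (polygons of
`L(w,e)`) to columns, and each edge to the box at the corresponding intersection;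
it is encoded by a pair of functions on edge-sides that are constant on vertices. -/
def NMap (lam : List ℕ) (S : Finset α) (b w e : Equiv.Perm α) : ℕ :=
  Nat.card {fp : (α → ℕ) × (α → ℕ) //
    (∀ s, s ∉ S → fp.1 s = 0 ∧ fp.2 s = 0) ∧
    (∀ s ∈ S, fp.1 (b s) = fp.1 s ∧ fp.1 (e s) = fp.1 s) ∧
    (∀ s ∈ S, fp.2 (w s) = fp.2 s ∧ fp.2 (e s) = fp.2 s) ∧
    ∀ s ∈ S, fp.2 s < lam.getD (fp.1 s) 0}

/-- The orientability generating series `\widehat{Ch}^{(α)}_π(λ)`, where the face-type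
`π` is realized by the fixed couple of pairings `(b,w)` of `S`, `lam` is the list of
row lengths of the Young diagram `λ`, and `a` is the Jack parameter `α`: the sum over
all pairings `e` of `S` (i.e., over all maps of face-type `π`) of
`(-1/√α)^{|V_•(M)|} (√α)^{|V_∘(M)|} w_M N_M(λ)`, times the sign `(-1)^{ℓ(π)}`,
where `w_M` is evaluated at `γ = (1-α)/√α`. -/
def genSeries [Fintype α] [LinearOrder α] (lam : List ℕ) (S : Finset α)
    (b w : Equiv.Perm α) (a : ℝ) : ℝ :=
  (-1 : ℝ) ^ numFaces S b w *
    ∑ e ∈ Finset.univ.filter fun e : Equiv.Perm α => IsPairing S e,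
      (-1 / Real.sqrt a) ^ numFaces S b e * (Real.sqrt a) ^ numFaces S w e *
        Polynomial.aeval ((1 - a) / Real.sqrt a) (mapWeight S b w e) *
          (NMap lam S b w e : ℝ)

/-- The number of embeddings `N_G(λ)` of the bipartite graph `G` with black vertex set
`ι`, white vertex set `κ` and edge relation `Edg` into the Young diagram whose list of
row lengths is `lam`: black vertices are mapped to rows of `λ`, white vertices to
columns of `λ`, and every edge to the box at the corresponding intersection, which
must belong to `λ`. -/
def NGraph {ι κ : Type*} (lam : List ℕ) (Edg : ι → κ → Prop) : ℕ :=
  Nat.card {fp : (ι → ℕ) × (κ → ℕ) //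
    (∀ u, 0 < lam.getD (fp.1 u) 0) ∧
    (∀ v, ∃ i, fp.2 v < lam.getD i 0) ∧
    ∀ u v, Edg u v → fp.2 v < lam.getD (fp.1 u) 0}

/-! ### Auxiliary lemmas for Statement 7 -/

section Aux

variable {b w : Equiv.Perm α}

lemma frie_inv_eq_self (hb : ∀ a, b (b a) = a) : b⁻¹ = b := by
  have h : b * b = 1 := by ext a; simp [Equiv.Perm.mul_apply, hb]
  exact (eq_inv_of_mul_eq_one_left h).symm

lemma frie_zpow_apply_add (j k : ℤ) (x : α) :
    ((w * b) ^ (j + k)) x = ((w * b) ^ j) (((w * b) ^ k) x) := by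
  rw [zpow_add, Equiv.Perm.mul_apply]

lemma frie_conj_apply (hb : ∀ a, b (b a) = a) (hw : ∀ a, w (w a) = a) (j : ℤ) (x : α) :
    b (((w * b) ^ j) x) = ((w * b) ^ (-j)) (b x) := by
  have hbi := frie_inv_eq_self hb
  have hwi := frie_inv_eq_self hw
  have hb2 : b * b = 1 := by ext a; simp [Perm.mul_apply, hb]
  have h1 : (w * b)⁻¹ = b * w := by rw [mul_inv_rev, hbi, hwi]
  have h2 : b * (w * b) * b⁻¹ = (w * b)⁻¹ := by
    rw [hbi, h1, mul_assoc b (w * b) b, mul_assoc w b b, hb2, mul_one]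
  have h3 : b * (w * b) ^ j * b⁻¹ = (w * b) ^ (-j) := by
    rw [← conj_zpow, h2, inv_zpow, ← zpow_neg]
  have h4 : b * (w * b) ^ j = (w * b) ^ (-j) * b :=
    (mul_inv_eq_iff_eq_mul).mp h3
  have := congrArg (fun p : Perm α => p x) h4
  simpa [Perm.mul_apply] using this

lemma frie_sameFace_refl (s : α) : SameFace b w s s := Or.inr ⟨0, by simp⟩

lemma frie_sameFace_symm (hb : ∀ a, b (b a) = a) (hw : ∀ a, w (w a) = a) {s t : α}
    (h : SameFace b w s t) : SameFace b w t s := by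
  rcases h with ⟨j, rfl⟩ | ⟨j, rfl⟩
  · left
    refine ⟨j, ?_⟩
    simp only [Perm.mul_apply]
    rw [frie_conj_apply hb hw j (b s), hb, ← frie_zpow_apply_add, add_neg_cancel, zpow_zero,
      Perm.one_apply]
  · right
    refine ⟨-j, ?_⟩
    rw [← frie_zpow_apply_add, neg_add_cancel, zpow_zero, Perm.one_apply]

lemma frie_sameFace_trans (hb : ∀ a, b (b a) = a) (hw : ∀ a, w (w a) = a) {s t u : α}
    (h1 : SameFace b w s t) (h2 : SameFace b w t u) : SameFace b w s u := by
  rcases h1 with ⟨j, rfl⟩ | ⟨j, rfl⟩ <;> rcases h2 with ⟨k, hk⟩ | ⟨k, hk⟩ <;>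
    (try simp only [Perm.mul_apply] at hk)
  · right; refine ⟨k - j, ?_⟩
    rw [hk, frie_conj_apply hb hw j (b s), hb, ← frie_zpow_apply_add, sub_eq_add_neg]
  · left; refine ⟨k + j, ?_⟩
    simp only [Perm.mul_apply]
    rw [hk, ← frie_zpow_apply_add]
  · left; refine ⟨k - j, ?_⟩
    simp only [Perm.mul_apply]
    rw [hk, frie_conj_apply hb hw j s, ← frie_zpow_apply_add, sub_eq_add_neg]
  · right; refine ⟨k + j, ?_⟩
    rw [hk, ← frie_zpow_apply_add]

lemma frie_sameFace_step_b (s : α) : SameFace b w s (b s) :=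
  Or.inl ⟨0, by simp⟩

lemma frie_sameFace_step_w (hb : ∀ a, b (b a) = a) (s : α) : SameFace b w s (w s) :=
  Or.inl ⟨1, by simp [Perm.mul_apply, hb]⟩

/-- `SameFace` decomposes into single steps. -/
lemma frie_sameFace_to_steps (hb : ∀ a, b (b a) = a) (hw : ∀ a, w (w a) = a) {s t : α}
    (h : SameFace b w s t) :
    Relation.ReflTransGen (fun x y => y = b x ∨ y = w x) s t := by
  set Step := fun x y : α => y = b x ∨ y = w x with hStep
  have key : ∀ (x : α) (j : ℤ), Relation.ReflTransGen Step x (((w * b) ^ j) x) := by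
    intro x j
    induction j using Int.induction_on with
    | zero => simpa using Relation.ReflTransGen.refl
    | succ k ih =>
        have h1 : ((w * b) ^ ((k : ℤ) + 1)) x = w (b (((w * b) ^ (k : ℤ)) x)) := by
          rw [add_comm, frie_zpow_apply_add, zpow_one, Perm.mul_apply]
        rw [h1]
        exact (ih.tail (Or.inl rfl)).tail (Or.inr rfl)
    | pred k ih =>
        have h1 : ((w * b) ^ (-(k : ℤ) - 1)) x = b (w (((w * b) ^ (-(k : ℤ))) x)) := by
          rw [sub_eq_add_neg, add_comm, frie_zpow_apply_add, zpow_neg_one, mul_inv_rev,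
            frie_inv_eq_self hb, frie_inv_eq_self hw, Perm.mul_apply]
        rw [h1]
        exact (ih.tail (Or.inr rfl)).tail (Or.inl rfl)
  rcases h with ⟨j, hj⟩ | ⟨j, hj⟩
  · simp only [Perm.mul_apply] at hj
    rw [hj]
    exact Relation.ReflTransGen.trans
      (Relation.ReflTransGen.single (show Step s (b s) from Or.inl rfl)) (key (b s) j)
  · rw [hj]; exact key s j

lemma frie_pairing_mem {S : Finset α} {f : Equiv.Perm α}
    (hf : IsPairing S f) {a : α} (ha : a ∈ S) : f a ∈ S := by
  rw [← hf.2, hf.1 a]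
  exact fun h => ((hf.2 a).2 ha) h.symm

/-- pointwise description of `removeP`. -/
lemma frie_removeP_apply {f : Equiv.Perm α} (hf : ∀ a, f (f a) = a) {s₁ s₂ : α}
    (h12 : s₁ ≠ s₂) (h1 : f s₁ ≠ s₁) (h1' : f s₁ ≠ s₂) (h2 : f s₂ ≠ s₁) (h2' : f s₂ ≠ s₂)
    (a : α) :
    removeP f s₁ s₂ a = if a = s₁ then s₁ else if a = s₂ then s₂ else
      if a = f s₁ then f s₂ else if a = f s₂ then f s₁ else f a := by
  have hff : f s₁ ≠ f s₂ := fun h => h12 (by rw [← hf s₁, h, hf])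
  simp only [removeP, Perm.mul_apply]
  split_ifs with ha1 ha2 hb1 hb2
  · subst ha1
    rw [Equiv.swap_apply_right, Equiv.swap_apply_of_ne_of_ne (Ne.symm h12) (Ne.symm h2'),
      Equiv.swap_apply_right]
  · subst ha2
    rw [Equiv.swap_apply_of_ne_of_ne h2' hff.symm, Equiv.swap_apply_right,
      Equiv.swap_apply_left]
  · subst hb1
    rw [hf, Equiv.swap_apply_of_ne_of_ne h12 (Ne.symm h1), Equiv.swap_apply_left,
      Equiv.swap_apply_of_ne_of_ne h2 h2']
  · subst hb2
    rw [hf, Equiv.swap_apply_left, Equiv.swap_apply_of_ne_of_ne h1 hff,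
      Equiv.swap_apply_of_ne_of_ne h1 h1']
  · have k1 : f a ≠ s₂ := fun h => hb2 (by rw [← hf a, h])
    have k2 : f a ≠ f s₁ := fun h => ha1 (by rw [← hf a, h, hf])
    have k3 : f a ≠ s₁ := fun h => hb1 (by rw [← hf a, h])
    have k4 : f a ≠ f s₂ := fun h => ha2 (by rw [← hf a, h, hf])
    rw [Equiv.swap_apply_of_ne_of_ne k1 k2, Equiv.swap_apply_of_ne_of_ne k3 k4,
      Equiv.swap_apply_of_ne_of_ne k3 k1]

lemma frie_removeP_invol {f : Equiv.Perm α} (hf : ∀ a, f (f a) = a) {s₁ s₂ : α}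
    (h12 : s₁ ≠ s₂) (h1 : f s₁ ≠ s₁) (h1' : f s₁ ≠ s₂) (h2 : f s₂ ≠ s₁) (h2' : f s₂ ≠ s₂)
    (a : α) : removeP f s₁ s₂ (removeP f s₁ s₂ a) = a := by
  have hff : f s₁ ≠ f s₂ := fun h => h12 (by rw [← hf s₁, h, hf])
  have hap := frie_removeP_apply hf h12 h1 h1' h2 h2'
  rw [hap a]
  split_ifs with c1 c2 c3 c4
  · rw [hap s₁, if_pos rfl, c1]
  · rw [hap s₂, if_neg (Ne.symm h12), if_pos rfl, c2]
  · rw [hap (f s₂), if_neg h2, if_neg h2', if_neg hff.symm, if_pos rfl, c3]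
  · rw [hap (f s₁), if_neg h1, if_neg h1', if_pos rfl, c4]
  · have k1 : f a ≠ s₁ := fun h => c3 (by rw [← hf a, h])
    have k2 : f a ≠ s₂ := fun h => c4 (by rw [← hf a, h])
    have k3 : f a ≠ f s₁ := fun h => c1 (by rw [← hf a, h, hf])
    have k4 : f a ≠ f s₂ := fun h => c2 (by rw [← hf a, h, hf])
    rw [hap (f a), if_neg k1, if_neg k2, if_neg k3, if_neg k4, hf]

lemma frie_orbit_mem {S : Finset α} (hb : IsPairing S b) (hw : IsPairing S w) {x : α}
    (hx : x ∈ S) (k : ℕ) : ((w * b) ^ k) x ∈ S := by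
  induction k with
  | zero => simpa using hx
  | succ k ih =>
      rw [pow_succ', Perm.mul_apply, Perm.mul_apply]
      exact frie_pairing_mem hw (frie_pairing_mem hb ih)

lemma frie_no_return {S : Finset α} (hb : IsPairing S b) (hw : IsPairing S w) {x : α}
    (hx : x ∈ S) (k : ℕ) : ((w * b) ^ k) x ≠ b x := by
  intro hkx
  rcases Nat.even_or_odd k with ⟨j, hj⟩ | ⟨j, hj⟩
  · have hy : b (((w * b) ^ j) x) = ((w * b) ^ j) x := by
      have h1 : b (((w * b) ^ (j : ℤ)) x) = ((w * b) ^ (-(j : ℤ))) (b x) :=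
        frie_conj_apply hb.1 hw.1 (j : ℤ) x
      rw [zpow_natCast] at h1
      have hjk : -(j : ℤ) + (k : ℤ) = (j : ℤ) := by omega
      rw [h1, ← hkx, ← zpow_natCast (w * b) k, ← frie_zpow_apply_add, hjk,
        zpow_natCast (w * b) j]
    exact ((hb.2 _).2 (frie_orbit_mem hb hw hx j)) hy
  · have h1 : b (((w * b) ^ j) x) = ((w * b) ^ (j + 1)) x := by
      have h2 := frie_conj_apply hb.1 hw.1 (j : ℤ) x
      rw [zpow_natCast] at h2
      have hjk : -(j : ℤ) + (k : ℤ) = ((j + 1 : ℕ) : ℤ) := by push_cast; omega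
      rw [h2, ← hkx, ← zpow_natCast (w * b) k, ← frie_zpow_apply_add, hjk,
        zpow_natCast (w * b) (j + 1)]
    have h3 : w (b (((w * b) ^ j) x)) = ((w * b) ^ (j + 1)) x := by
      rw [pow_succ', Perm.mul_apply, Perm.mul_apply]
    have hz : w (b (((w * b) ^ j) x)) = b (((w * b) ^ j) x) := by rw [h3, h1]
    exact ((hw.2 _).2 (frie_pairing_mem hb (frie_orbit_mem hb hw hx j))) hz

lemma frie_exists_period {S : Finset α} (hb : IsPairing S b) (hw : IsPairing S w) {x : α}
    (hx : x ∈ S) : ∃ n : ℕ, 0 < n ∧ ((w * b) ^ n) x = x := by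
  have hmaps : ∀ i ∈ Finset.range (S.card + 1), ((w * b) ^ i) x ∈ S :=
    fun i _ => frie_orbit_mem hb hw hx i
  have hcard : S.card < (Finset.range (S.card + 1)).card := by simp
  obtain ⟨i, hi, j, hj, hne, heq⟩ :=
    Finset.exists_ne_map_eq_of_card_lt_of_maps_to hcard hmaps
  suffices H : ∀ i j : ℕ, i < j → ((w * b) ^ i) x = ((w * b) ^ j) x →
      ∃ n : ℕ, 0 < n ∧ ((w * b) ^ n) x = x by
    rcases lt_or_gt_of_ne hne with h | h
    · exact H i j h heq
    · exact H j i h heq.symm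
  intro i j hij he
  refine ⟨j - i, by omega, ?_⟩
  have h5 : ((w * b) ^ (i + (j - i))) x = ((w * b) ^ i) x := by
    rw [show i + (j - i) = j by omega, ← he]
  rw [pow_add, Perm.mul_apply] at h5
  exact ((w * b) ^ i).injective h5

/-- The merging lemma: in the map with the interface edge `{x, y}` removed, the two
neighbours `b x` and `w x` of `x` in its face are still in a common face. -/
lemma frie_merge {S : Finset α} {b' w' : Equiv.Perm α} (hb : IsPairing S b)
    (hw : IsPairing S w) (hb' : ∀ a, b' (b' a) = a) (hw' : ∀ a, w' (w' a) = a) {x y : α}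
    (hx : x ∈ S) (hxy : ¬ SameFace b w x y)
    (hstep : ∀ t u : α, t ≠ x → t ≠ y → u ≠ x → u ≠ y → (u = b t ∨ u = w t) →
      SameFace b' w' t u) :
    SameFace b' w' (b x) (w x) := by
  have hper := frie_exists_period hb hw hx
  obtain ⟨hn0, hnfix⟩ := Nat.find_spec hper
  set n := Nat.find hper with hn
  have hmin : ∀ m : ℕ, 0 < m → m < n → ((w * b) ^ m) x ≠ x :=
    fun m h1 h2 hc => Nat.find_min hper h2 ⟨h1, hc⟩
  have hfact : ∀ k : ℕ, ((w * b) ^ k) x ≠ y ∧ b (((w * b) ^ k) x) ≠ x ∧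
      b (((w * b) ^ k) x) ≠ y := by
    intro k
    have hsame : SameFace b w x (((w * b) ^ k) x) :=
      Or.inr ⟨(k : ℤ), by rw [zpow_natCast]⟩
    have hsame2 : SameFace b w x (b (((w * b) ^ k) x)) :=
      frie_sameFace_trans hb.1 hw.1 hsame (frie_sameFace_step_b _)
    refine ⟨fun hc => hxy (hc ▸ hsame), fun hc => ?_, fun hc => hxy (hc ▸ hsame2)⟩
    have hc' := congrArg (fun z => b z) hc
    rw [hb.1] at hc'
    exact frie_no_return hb hw hx k hc'
  have key : ∀ k : ℕ, k ≤ n - 1 → SameFace b' w' (b x) (b (((w * b) ^ k) x)) := by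
    intro k
    induction k with
    | zero => intro _; simpa using frie_sameFace_refl (b x)
    | succ k ih =>
        intro hk1
        have hk : k ≤ n - 1 := le_trans (Nat.le_succ k) hk1
        have ihh := ih hk
        obtain ⟨hky, hkbx, hkby⟩ := hfact k
        obtain ⟨hk1y, hk1bx, hk1by⟩ := hfact (k + 1)
        have hux : ((w * b) ^ (k + 1)) x ≠ x := hmin (k + 1) (Nat.succ_pos k) (by omega)
        have hstep1 : SameFace b' w' (b (((w * b) ^ k) x)) (((w * b) ^ (k + 1)) x) := by
          apply hstep _ _ hkbx hkby hux hk1y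
          right
          rw [pow_succ', Perm.mul_apply, Perm.mul_apply]
        have hstep2 : SameFace b' w' (((w * b) ^ (k + 1)) x) (b (((w * b) ^ (k + 1)) x)) :=
          hstep _ _ hux hk1y hk1bx hk1by (Or.inl rfl)
        exact frie_sameFace_trans hb' hw' (frie_sameFace_trans hb' hw' ihh hstep1) hstep2
  have hfin : b (((w * b) ^ (n - 1)) x) = w x := by
    have h1 : ((w * b) ^ (n - 1 + 1)) x = x := by
      rw [show n - 1 + 1 = n by omega]
      exact hnfix
    rw [pow_succ', Perm.mul_apply, Perm.mul_apply] at h1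
    have h2 := congrArg (fun z => w z) h1
    rw [hw.1] at h2
    exact h2
  have hlast := key (n - 1) le_rfl
  rwa [hfin] at hlast

lemma frie_mem_faceOf {S : Finset α} {s u : α} :
    u ∈ faceOf S b w s ↔ u ∈ S ∧ SameFace b w s u := Finset.mem_filter

end Aux

/-- interface edge removal: let `E₀ = {s₁, s₂}` (with `s₂ = e s₁`)
be an interface edge of the map `M = (S,b,w,e)`, whose edge-sides lie in the two
different faces `F₁` (of size `2r`) and `F₂` (of size `2r'`). Then the faces of
`M \ E₀` are obtained from those of `M` by replacing `F₁` and `F₂` by a single face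
of size `2(r + r' - 1)` (consisting of the remaining edge-sides of `F₁ ∪ F₂`),
all other faces being unchanged. -/
theorem faces_remove_interface_edge (S : Finset α) (b w e : Equiv.Perm α)
    (hb : IsPairing S b) (hw : IsPairing S w) (he : IsPairing S e)
    (s₁ s₂ : α) (hs₁ : s₁ ∈ S) (hedge : e s₁ = s₂)
    (hinterface : IsInterface b w s₁ s₂)
    (r r' : ℕ)
    (hsize₁ : (faceOf S b w s₁).card = 2 * r)
    (hsize₂ : (faceOf S b w s₂).card = 2 * r') :
    ((faceOf S b w s₁ ∪ faceOf S b w s₂) \ {s₁, s₂}).card = 2 * (r + r' - 1) ∧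
    faces (S \ {s₁, s₂}) (removeP b s₁ s₂) (removeP w s₁ s₂)
      = ((faces S b w).erase (faceOf S b w s₁)).erase (faceOf S b w s₂) ∪
          {(faceOf S b w s₁ ∪ faceOf S b w s₂) \ {s₁, s₂}} := by
  have hbinv : ∀ a, b (b a) = a := hb.1
  have hbmov : ∀ a, b a ≠ a ↔ a ∈ S := hb.2
  have hwinv : ∀ a, w (w a) = a := hw.1
  have hwmov : ∀ a, w a ≠ a ↔ a ∈ S := hw.2
  have hIF : ¬ SameFace b w s₁ s₂ := hinterface
  have hs₂S : s₂ ∈ S := hedge ▸ frie_pairing_mem he hs₁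
  have hne12 : s₁ ≠ s₂ := fun h => ((he.2 s₁).2 hs₁) (by rw [hedge, ← h])
  have hbs₁ : b s₁ ≠ s₁ := (hbmov s₁).2 hs₁
  have hbs₂ : b s₂ ≠ s₂ := (hbmov s₂).2 hs₂S
  have hws₁ : w s₁ ≠ s₁ := (hwmov s₁).2 hs₁
  have hws₂ : w s₂ ≠ s₂ := (hwmov s₂).2 hs₂S
  have hbs₁2 : b s₁ ≠ s₂ := fun h => hIF (by rw [← h]; exact frie_sameFace_step_b s₁)
  have hws₁2 : w s₁ ≠ s₂ := fun h => hIF (by rw [← h]; exact frie_sameFace_step_w hbinv s₁)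
  have hbs₂1 : b s₂ ≠ s₁ := fun h => hbs₁2 (by rw [← h, hbinv])
  have hws₂1 : w s₂ ≠ s₁ := fun h => hws₁2 (by rw [← h, hwinv])
  have hb'ap : ∀ a, removeP b s₁ s₂ a = if a = s₁ then s₁ else if a = s₂ then s₂ else
      if a = b s₁ then b s₂ else if a = b s₂ then b s₁ else b a :=
    frie_removeP_apply hbinv hne12 hbs₁ hbs₁2 hbs₂1 hbs₂
  have hw'ap : ∀ a, removeP w s₁ s₂ a = if a = s₁ then s₁ else if a = s₂ then s₂ else
      if a = w s₁ then w s₂ else if a = w s₂ then w s₁ else w a :=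
    frie_removeP_apply hwinv hne12 hws₁ hws₁2 hws₂1 hws₂
  have hb'inv : ∀ a, removeP b s₁ s₂ (removeP b s₁ s₂ a) = a :=
    frie_removeP_invol hbinv hne12 hbs₁ hbs₁2 hbs₂1 hbs₂
  have hw'inv : ∀ a, removeP w s₁ s₂ (removeP w s₁ s₂ a) = a :=
    frie_removeP_invol hwinv hne12 hws₁ hws₁2 hws₂1 hws₂
  have hb'bs₁ : removeP b s₁ s₂ (b s₁) = b s₂ := by
    rw [hb'ap, if_neg hbs₁, if_neg hbs₁2, if_pos rfl]
  -- interior steps survive in the new map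
  have hstep : ∀ t u : α, t ≠ s₁ → t ≠ s₂ → u ≠ s₁ → u ≠ s₂ → (u = b t ∨ u = w t) →
      SameFace (removeP b s₁ s₂) (removeP w s₁ s₂) t u := by
    intro t u ht1 ht2 hu1 hu2 h
    rcases h with rfl | rfl
    · have htb1 : t ≠ b s₁ := fun h => hu1 (by rw [h, hbinv])
      have htb2 : t ≠ b s₂ := fun h => hu2 (by rw [h, hbinv])
      have hval : b t = removeP b s₁ s₂ t := by
        rw [hb'ap, if_neg ht1, if_neg ht2, if_neg htb1, if_neg htb2]
      rw [hval]
      exact frie_sameFace_step_b t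
    · have htw1 : t ≠ w s₁ := fun h => hu1 (by rw [h, hwinv])
      have htw2 : t ≠ w s₂ := fun h => hu2 (by rw [h, hwinv])
      have hval : w t = removeP w s₁ s₂ t := by
        rw [hw'ap, if_neg ht1, if_neg ht2, if_neg htw1, if_neg htw2]
      rw [hval]
      exact frie_sameFace_step_w hb'inv t
  -- the two merges
  have hmerge₁ : SameFace (removeP b s₁ s₂) (removeP w s₁ s₂) (b s₁) (w s₁) :=
    frie_merge hb hw hb'inv hw'inv hs₁ hIF hstep
  have hIF₂ : ¬ SameFace b w s₂ s₁ := fun h => hIF (frie_sameFace_symm hbinv hwinv h)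
  have hmerge₂ : SameFace (removeP b s₁ s₂) (removeP w s₁ s₂) (b s₂) (w s₂) :=
    frie_merge hb hw hb'inv hw'inv hs₂S hIF₂
      (fun t u h1 h2 h3 h4 h5 => hstep t u h2 h1 h4 h3 h5)
  have hlink : SameFace (removeP b s₁ s₂) (removeP w s₁ s₂) (b s₁) (b s₂) := by
    rw [← hb'bs₁]
    exact frie_sameFace_step_b (b s₁)
  -- the representative map
  set rep : α → α := fun z => if z = s₁ then b s₁ else if z = s₂ then b s₂ else z with hrep
  have hrep₁ : rep s₁ = b s₁ := by simp [hrep]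
  have hrep₂ : rep s₂ = b s₂ := by simp [hrep, Ne.symm hne12]
  have hrepo : ∀ z, z ≠ s₁ → z ≠ s₂ → rep z = z := by
    intro z h1 h2; simp [hrep, h1, h2]
  -- single steps transfer
  have hstep_rep : ∀ t u : α, (u = b t ∨ u = w t) →
      SameFace (removeP b s₁ s₂) (removeP w s₁ s₂) (rep t) (rep u) := by
    intro t u h
    by_cases ht1 : t = s₁
    · subst ht1
      rcases h with rfl | rfl
      · rw [hrep₁, hrepo (b t) hbs₁ hbs₁2]; exact frie_sameFace_refl _
      · rw [hrep₁, hrepo (w t) hws₁ hws₁2]; exact hmerge₁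
    · by_cases ht2 : t = s₂
      · subst ht2
        rcases h with rfl | rfl
        · rw [hrep₂, hrepo (b t) hbs₂1 hbs₂]; exact frie_sameFace_refl _
        · rw [hrep₂, hrepo (w t) hws₂1 hws₂]; exact hmerge₂
      · rw [hrepo t ht1 ht2]
        rcases h with rfl | rfl
        · by_cases hbt1 : b t = s₁
          · have ht' : t = b s₁ := by rw [← hbt1, hbinv]
            rw [hbt1, hrep₁, ht']; exact frie_sameFace_refl _
          · by_cases hbt2 : b t = s₂
            · have ht' : t = b s₂ := by rw [← hbt2, hbinv]
              rw [hbt2, hrep₂, ht']; exact frie_sameFace_refl _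
            · rw [hrepo _ hbt1 hbt2]
              exact hstep t (b t) ht1 ht2 hbt1 hbt2 (Or.inl rfl)
        · by_cases hwt1 : w t = s₁
          · have ht' : t = w s₁ := by rw [← hwt1, hwinv]
            rw [hwt1, hrep₁, ht']
            exact frie_sameFace_symm hb'inv hw'inv hmerge₁
          · by_cases hwt2 : w t = s₂
            · have ht' : t = w s₂ := by rw [← hwt2, hwinv]
              rw [hwt2, hrep₂, ht']
              exact frie_sameFace_symm hb'inv hw'inv hmerge₂
            · rw [hrepo _ hwt1 hwt2]
              exact hstep t (w t) ht1 ht2 hwt1 hwt2 (Or.inr rfl)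
  -- old connectivity transfers to the new map, up to representatives
  have htransfer : ∀ t u : α, SameFace b w t u →
      SameFace (removeP b s₁ s₂) (removeP w s₁ s₂) (rep t) (rep u) := by
    intro t u h
    have h' := frie_sameFace_to_steps hbinv hwinv h
    clear h
    induction h' with
    | refl => exact frie_sameFace_refl _
    | tail hab hbc ih =>
        exact frie_sameFace_trans hb'inv hw'inv ih (hstep_rep _ _ hbc)
  -- the merged relation in the old map
  have hRtrans : ∀ {t u v : α},
      (SameFace b w t u ∨ ((SameFace b w s₁ t ∨ SameFace b w s₂ t) ∧
        (SameFace b w s₁ u ∨ SameFace b w s₂ u))) →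
      (SameFace b w u v ∨ ((SameFace b w s₁ u ∨ SameFace b w s₂ u) ∧
        (SameFace b w s₁ v ∨ SameFace b w s₂ v))) →
      (SameFace b w t v ∨ ((SameFace b w s₁ t ∨ SameFace b w s₂ t) ∧
        (SameFace b w s₁ v ∨ SameFace b w s₂ v))) := by
    intro t u v h1 h2
    rcases h1 with h1 | ⟨ha, hb1⟩
    · rcases h2 with h2 | ⟨hc, hd⟩
      · exact Or.inl (frie_sameFace_trans hbinv hwinv h1 h2)
      · refine Or.inr ⟨?_, hd⟩
        rcases hc with hc | hc
        · exact Or.inl (frie_sameFace_trans hbinv hwinv hc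
            (frie_sameFace_symm hbinv hwinv h1))
        · exact Or.inr (frie_sameFace_trans hbinv hwinv hc
            (frie_sameFace_symm hbinv hwinv h1))
    · rcases h2 with h2 | ⟨hc, hd⟩
      · refine Or.inr ⟨ha, ?_⟩
        rcases hb1 with hb1 | hb1
        · exact Or.inl (frie_sameFace_trans hbinv hwinv hb1 h2)
        · exact Or.inr (frie_sameFace_trans hbinv hwinv hb1 h2)
      · exact Or.inr ⟨ha, hd⟩
  -- every new-map step is compatible with the merged old relation
  have hRstep : ∀ t u : α, (u = removeP b s₁ s₂ t ∨ u = removeP w s₁ s₂ t) →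
      (SameFace b w t u ∨ ((SameFace b w s₁ t ∨ SameFace b w s₂ t) ∧
        (SameFace b w s₁ u ∨ SameFace b w s₂ u))) := by
    intro t u h
    rcases h with rfl | rfl
    · rw [hb'ap t]
      split_ifs with c1 c2 c3 c4
      · exact Or.inl (by rw [c1]; exact frie_sameFace_refl s₁)
      · exact Or.inl (by rw [c2]; exact frie_sameFace_refl s₂)
      · exact Or.inr ⟨Or.inl (by rw [c3]; exact frie_sameFace_step_b s₁),
          Or.inr (frie_sameFace_step_b s₂)⟩
      · exact Or.inr ⟨Or.inr (by rw [c4]; exact frie_sameFace_step_b s₂),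
          Or.inl (frie_sameFace_step_b s₁)⟩
      · exact Or.inl (frie_sameFace_step_b t)
    · rw [hw'ap t]
      split_ifs with c1 c2 c3 c4
      · exact Or.inl (by rw [c1]; exact frie_sameFace_refl s₁)
      · exact Or.inl (by rw [c2]; exact frie_sameFace_refl s₂)
      · exact Or.inr ⟨Or.inl (by rw [c3]; exact frie_sameFace_step_w hbinv s₁),
          Or.inr (frie_sameFace_step_w hbinv s₂)⟩
      · exact Or.inr ⟨Or.inr (by rw [c4]; exact frie_sameFace_step_w hbinv s₂),
          Or.inl (frie_sameFace_step_w hbinv s₁)⟩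
      · exact Or.inl (frie_sameFace_step_w hbinv t)
  have hback : ∀ t u : α,
      SameFace (removeP b s₁ s₂) (removeP w s₁ s₂) t u →
      (SameFace b w t u ∨ ((SameFace b w s₁ t ∨ SameFace b w s₂ t) ∧
        (SameFace b w s₁ u ∨ SameFace b w s₂ u))) := by
    intro t u h
    have h' := frie_sameFace_to_steps hb'inv hw'inv h
    clear h
    induction h' with
    | refl => exact Or.inl (frie_sameFace_refl _)
    | tail hab hbc ih => exact hRtrans ih (hRstep _ _ hbc)
  -- the forward direction
  have hQ_of_R : ∀ t u : α, t ≠ s₁ → t ≠ s₂ → u ≠ s₁ → u ≠ s₂ →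
      (SameFace b w t u ∨ ((SameFace b w s₁ t ∨ SameFace b w s₂ t) ∧
        (SameFace b w s₁ u ∨ SameFace b w s₂ u))) →
      SameFace (removeP b s₁ s₂) (removeP w s₁ s₂) t u := by
    intro t u ht1 ht2 hu1 hu2 h
    rcases h with h | ⟨hA, hB⟩
    · have h' := htransfer t u h
      rwa [hrepo t ht1 ht2, hrepo u hu1 hu2] at h'
    · have hA' : SameFace (removeP b s₁ s₂) (removeP w s₁ s₂) (b s₁) t ∨
          SameFace (removeP b s₁ s₂) (removeP w s₁ s₂) (b s₂) t := by
        rcases hA with h | h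
        · left; have h' := htransfer s₁ t h; rwa [hrep₁, hrepo t ht1 ht2] at h'
        · right; have h' := htransfer s₂ t h; rwa [hrep₂, hrepo t ht1 ht2] at h'
      have hB' : SameFace (removeP b s₁ s₂) (removeP w s₁ s₂) (b s₁) u ∨
          SameFace (removeP b s₁ s₂) (removeP w s₁ s₂) (b s₂) u := by
        rcases hB with h | h
        · left; have h' := htransfer s₁ u h; rwa [hrep₁, hrepo u hu1 hu2] at h'
        · right; have h' := htransfer s₂ u h; rwa [hrep₂, hrepo u hu1 hu2] at h'
      rcases hA' with hA' | hA' <;> rcases hB' with hB' | hB'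
      · exact frie_sameFace_trans hb'inv hw'inv
          (frie_sameFace_symm hb'inv hw'inv hA') hB'
      · exact frie_sameFace_trans hb'inv hw'inv
          (frie_sameFace_symm hb'inv hw'inv hA')
          (frie_sameFace_trans hb'inv hw'inv hlink hB')
      · exact frie_sameFace_trans hb'inv hw'inv
          (frie_sameFace_symm hb'inv hw'inv hA')
          (frie_sameFace_trans hb'inv hw'inv
            (frie_sameFace_symm hb'inv hw'inv hlink) hB')
      · exact frie_sameFace_trans hb'inv hw'inv
          (frie_sameFace_symm hb'inv hw'inv hA') hB'
  have hS' : ∀ u : α, u ∈ S \ {s₁, s₂} ↔ u ∈ S ∧ u ≠ s₁ ∧ u ≠ s₂ := by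
    intro u
    simp [Finset.mem_sdiff, not_or]
  -- unchanged faces
  have hfaceA : ∀ t, t ∈ S → t ≠ s₁ → t ≠ s₂ → ¬ SameFace b w s₁ t → ¬ SameFace b w s₂ t →
      faceOf (S \ {s₁, s₂}) (removeP b s₁ s₂) (removeP w s₁ s₂) t = faceOf S b w t := by
    intro t htS ht1 ht2 hn1 hn2
    ext u
    rw [frie_mem_faceOf, frie_mem_faceOf, hS']
    constructor
    · rintro ⟨⟨huS, hu1, hu2⟩, hQ⟩
      refine ⟨huS, ?_⟩
      rcases hback t u hQ with h | ⟨hA, _⟩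
      · exact h
      · rcases hA with hA | hA
        · exact absurd hA hn1
        · exact absurd hA hn2
    · rintro ⟨huS, hSame⟩
      have hu1 : u ≠ s₁ := fun h => hn1 (frie_sameFace_symm hbinv hwinv (h ▸ hSame))
      have hu2 : u ≠ s₂ := fun h => hn2 (frie_sameFace_symm hbinv hwinv (h ▸ hSame))
      exact ⟨⟨huS, hu1, hu2⟩, hQ_of_R t u ht1 ht2 hu1 hu2 (Or.inl hSame)⟩
  -- the merged face
  have hfaceB : ∀ t, t ∈ S → t ≠ s₁ → t ≠ s₂ → (SameFace b w s₁ t ∨ SameFace b w s₂ t) →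
      faceOf (S \ {s₁, s₂}) (removeP b s₁ s₂) (removeP w s₁ s₂) t =
        (faceOf S b w s₁ ∪ faceOf S b w s₂) \ {s₁, s₂} := by
    intro t htS ht1 ht2 hOr
    ext u
    rw [frie_mem_faceOf]
    constructor
    · rintro ⟨hu', hQ⟩
      rw [hS'] at hu'
      obtain ⟨huS, hu1, hu2⟩ := hu'
      have hU : SameFace b w s₁ u ∨ SameFace b w s₂ u := by
        rcases hback t u hQ with h | ⟨_, hB⟩
        · rcases hOr with h1 | h1
          · exact Or.inl (frie_sameFace_trans hbinv hwinv h1 h)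
          · exact Or.inr (frie_sameFace_trans hbinv hwinv h1 h)
        · exact hB
      rw [Finset.mem_sdiff, Finset.mem_union, frie_mem_faceOf, frie_mem_faceOf]
      refine ⟨?_, by simp [hu1, hu2]⟩
      rcases hU with h | h
      · exact Or.inl ⟨huS, h⟩
      · exact Or.inr ⟨huS, h⟩
    · intro hu
      rw [Finset.mem_sdiff, Finset.mem_union, frie_mem_faceOf, frie_mem_faceOf] at hu
      obtain ⟨hU, hns⟩ := hu
      have hu12 : u ≠ s₁ ∧ u ≠ s₂ := by simpa [not_or] using hns
      have huS : u ∈ S := by rcases hU with h | h <;> exact h.1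
      have hU' : SameFace b w s₁ u ∨ SameFace b w s₂ u := by
        rcases hU with h | h
        · exact Or.inl h.2
        · exact Or.inr h.2
      refine ⟨(hS' u).2 ⟨huS, hu12.1, hu12.2⟩, ?_⟩
      exact hQ_of_R t u ht1 ht2 hu12.1 hu12.2 (Or.inr ⟨hOr, hU'⟩)
  have hfaceeq : ∀ s t : α, SameFace b w s t → faceOf S b w s = faceOf S b w t := by
    intro s t h
    ext u
    rw [frie_mem_faceOf, frie_mem_faceOf]
    constructor
    · rintro ⟨m, hh⟩
      exact ⟨m, frie_sameFace_trans hbinv hwinv (frie_sameFace_symm hbinv hwinv h) hh⟩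
    · rintro ⟨m, hh⟩
      exact ⟨m, frie_sameFace_trans hbinv hwinv h hh⟩
  have hs₁F : s₁ ∈ faceOf S b w s₁ := frie_mem_faceOf.2 ⟨hs₁, frie_sameFace_refl s₁⟩
  have hs₂F : s₂ ∈ faceOf S b w s₂ := frie_mem_faceOf.2 ⟨hs₂S, frie_sameFace_refl s₂⟩
  constructor
  · -- the cardinality claim
    have hdisj : Disjoint (faceOf S b w s₁) (faceOf S b w s₂) := by
      rw [Finset.disjoint_left]
      intro a ha hb2
      rw [frie_mem_faceOf] at ha hb2
      exact hIF (frie_sameFace_trans hbinv hwinv ha.2 (frie_sameFace_symm hbinv hwinv hb2.2))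
    have hsub : ({s₁, s₂} : Finset α) ⊆ faceOf S b w s₁ ∪ faceOf S b w s₂ := by
      intro a ha
      simp only [Finset.mem_insert, Finset.mem_singleton] at ha
      rcases ha with rfl | rfl
      · exact Finset.mem_union_left _ hs₁F
      · exact Finset.mem_union_right _ hs₂F
    have hr : 0 < 2 * r := by rw [← hsize₁]; exact Finset.card_pos.2 ⟨s₁, hs₁F⟩
    have hr' : 0 < 2 * r' := by rw [← hsize₂]; exact Finset.card_pos.2 ⟨s₂, hs₂F⟩
    rw [Finset.card_sdiff_of_subset hsub, Finset.card_union_of_disjoint hdisj, hsize₁, hsize₂,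
      Finset.card_pair hne12]
    omega
  · -- the faces claim
    ext F
    simp only [faces, Finset.mem_image, Finset.mem_union, Finset.mem_singleton,
      Finset.mem_erase]
    constructor
    · rintro ⟨t, ht, rfl⟩
      rw [hS'] at ht
      obtain ⟨htS, ht1, ht2⟩ := ht
      by_cases hc : SameFace b w s₁ t ∨ SameFace b w s₂ t
      · right
        exact hfaceB t htS ht1 ht2 hc
      · push_neg at hc
        left
        rw [hfaceA t htS ht1 ht2 hc.1 hc.2]
        have htF : t ∈ faceOf S b w t := frie_mem_faceOf.2 ⟨htS, frie_sameFace_refl t⟩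
        refine ⟨?_, ?_, ⟨t, htS, rfl⟩⟩
        · intro h
          rw [h] at htF
          exact hc.2 (frie_mem_faceOf.1 htF).2
        · intro h
          rw [h] at htF
          exact hc.1 (frie_mem_faceOf.1 htF).2
    · rintro (⟨hne2, hne1, ⟨t, htS, rfl⟩⟩ | rfl)
      · have hn1 : ¬ SameFace b w s₁ t := fun h => hne1 (hfaceeq s₁ t h).symm
        have hn2 : ¬ SameFace b w s₂ t := fun h => hne2 (hfaceeq s₂ t h).symm
        have ht1 : t ≠ s₁ := fun h => hn1 (by rw [h]; exact frie_sameFace_refl s₁)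
        have ht2 : t ≠ s₂ := fun h => hn2 (by rw [h]; exact frie_sameFace_refl s₂)
        exact ⟨t, (hS' t).2 ⟨htS, ht1, ht2⟩, hfaceA t htS ht1 ht2 hn1 hn2⟩
      · have hbS : b s₁ ∈ S := frie_pairing_mem hb hs₁
        exact ⟨b s₁, (hS' _).2 ⟨hbS, hbs₁, hbs₁2⟩,
          hfaceB (b s₁) hbS hbs₁ hbs₁2 (Or.inl (frie_sameFace_step_b s₁))⟩


end
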